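/- Let (Ω,Σ,μ) be σ-finite, p ∈ [1,∞], and K := {x ∈ L^p(μ) : x_a ≤ x ≤ x_b μ-a.e.} nonempty, x ∈ K. For every ε > 0, every h ∈ L^∞(μ) ∩ L^p(μ) satisfying h ≥ 0 μ-a.e. on {x_a + ε ≥ x} and h ≤ 0 μ-a.e. on {x_b − ε ≤ x} belongs to the tangent cone T_K(x); moreover every element h of T_K(x) satisfies h ≥ 0 μ-a.e. on {x_a = x} and h ≤ 0 μ-a.e. on {x_b = x}. -/

import Mathlib

open MeasureTheory Filter Topology Pointwise
open scoped ENNReal Classical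

noncomputable section

/-- Bouligand tangent cone of a set `C` at `x`. -/
def bouligandTangentCone {E : Type*} [NormedAddCommGroup E] [NormedSpace ℝ E]
    (C : Set E) (x : E) : Set E :=
  {d | ∃ (xs : ℕ → E) (t : ℕ → ℝ), (∀ k, xs k ∈ C) ∧ (∀ k, 0 < t k) ∧
      Tendsto xs atTop (𝓝 x) ∧ Tendsto t atTop (𝓝 0) ∧
      Tendsto (fun k => (t k)⁻¹ • (xs k - x)) atTop (𝓝 d)}

/-- The duality pairing between `L^q(μ)` and `L^p(μ)`. -/
def pairing {Ω : Type*} [MeasurableSpace Ω] (μ : Measure Ω) {q p : ℝ≥0∞}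
    (y : Lp ℝ q μ) (x : Lp ℝ p μ) : ℝ := ∫ ω, y ω * x ω ∂μ

/-- The polar of a subset of `L^p(μ)`, taken in `L^q(μ)`. -/
def polarCone {Ω : Type*} [MeasurableSpace Ω] (μ : Measure Ω) (p q : ℝ≥0∞)
    (S : Set (Lp ℝ p μ)) : Set (Lp ℝ q μ) :=
  {y | ∀ s ∈ S, pairing μ y s ≤ 0}

/-- The normal cone: polar of the Bouligand tangent cone, taken in `L^q(μ)`. -/
def normalCone {Ω : Type*} [MeasurableSpace Ω] (μ : Measure Ω) (p q : ℝ≥0∞)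
    [Fact (1 ≤ p)] (C : Set (Lp ℝ p μ)) (x : Lp ℝ p μ) : Set (Lp ℝ q μ) :=
  polarCone μ p q (bouligandTangentCone C x)

lemma aux_le_sub (a : EReal) (b c : ℝ) (h : a + (c : EReal) ≤ (b : EReal)) :
    a ≤ ((b - c : ℝ) : EReal) := by
  induction a with
  | bot => exact bot_le
  | coe a =>
    rw [← EReal.coe_add, EReal.coe_le_coe_iff] at h
    exact EReal.coe_le_coe_iff.2 (by linarith)
  | top => simp [EReal.top_add_coe] at h

lemma aux_add_le (a : EReal) (b c : ℝ) (h : (b : EReal) ≤ a - (c : EReal)) :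
    ((b + c : ℝ) : EReal) ≤ a := by
  induction a with
  | bot => rw [EReal.bot_sub] at h; simp at h
  | coe a =>
    rw [← EReal.coe_sub, EReal.coe_le_coe_iff] at h
    exact EReal.coe_le_coe_iff.2 (by linarith)
  | top => exact le_top

theorem tangent_cone_estimates_of_box_constraints
    {Ω : Type*} [MeasurableSpace Ω] (μ : Measure Ω) [SigmaFinite μ]
    (p : ℝ≥0∞) [Fact (1 ≤ p)] (hp : 1 ≤ p)
    (xa xb : Ω → EReal) (hxa : Measurable xa) (hxb : Measurable xb)
    (K : Set (Lp ℝ p μ))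
    (hK : K = {y : Lp ℝ p μ | ∀ᵐ ω ∂μ, xa ω ≤ (y ω : EReal) ∧ (y ω : EReal) ≤ xb ω})
    (hKne : K.Nonempty) (x : Lp ℝ p μ) (hx : x ∈ K) :
    (∀ ε : ℝ, 0 < ε → ∀ h : Lp ℝ p μ, MemLp (⇑h) ∞ μ →
      (∀ᵐ ω ∂μ, (x ω : EReal) ≤ xa ω + (ε : EReal) → 0 ≤ h ω) →
      (∀ᵐ ω ∂μ, xb ω - (ε : EReal) ≤ (x ω : EReal) → h ω ≤ 0) →
      h ∈ bouligandTangentCone K x) ∧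
    (∀ h : Lp ℝ p μ, h ∈ bouligandTangentCone K x →
      (∀ᵐ ω ∂μ, xa ω = (x ω : EReal) → 0 ≤ h ω) ∧
      (∀ᵐ ω ∂μ, xb ω = (x ω : EReal) → h ω ≤ 0)) := by
  constructor
  · -- Part 1
    intro ε hε h hmem hA hB
    set C : ℝ := (eLpNorm (⇑h) ∞ μ).toReal with hC
    have hC0 : 0 ≤ C := ENNReal.toReal_nonneg
    have hbound : ∀ᵐ ω ∂μ, ‖h ω‖ ≤ C := by
      have h1 : ∀ᵐ ω ∂μ, (‖h ω‖₊ : ℝ≥0∞) ≤ eLpNormEssSup (⇑h) μ := ae_le_eLpNormEssSup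
      have hfin : eLpNorm (⇑h) ∞ μ < ∞ := hmem.2
      rw [eLpNorm_exponent_top] at hfin hC
      filter_upwards [h1] with ω hω
      have := ENNReal.toReal_mono hfin.ne hω
      simpa [hC] using this
    set δ : ℝ := ε / (C + 1) with hδ
    have hδ0 : 0 < δ := div_pos hε (by linarith)
    set t : ℕ → ℝ := fun k => δ * (1 / (k + 1)) with ht
    have ht0 : ∀ k, 0 < t k := fun k => by positivity
    have htδ : ∀ k, t k ≤ δ := by
      intro k
      have h1 : (1 : ℝ) / (k + 1) ≤ 1 := by
        rw [div_le_one (by positivity)]; simp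
      calc t k = δ * (1 / (k + 1)) := rfl
        _ ≤ δ * 1 := by nlinarith [hδ0.le]
        _ = δ := mul_one δ
    have httend : Tendsto t atTop (𝓝 0) := by
      have := tendsto_one_div_add_atTop_nhds_zero_nat.const_mul δ
      simpa [ht, one_div] using this
    refine ⟨fun k => x + t k • h, t, ?_, ht0, ?_, httend, ?_⟩
    · -- membership in K
      intro k
      rw [hK]
      have hcoe : ∀ᵐ ω ∂μ, (x + t k • h) ω = x ω + t k * h ω := by
        filter_upwards [Lp.coeFn_add x (t k • h), Lp.coeFn_smul (t k) h] with ω h1 h2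
        rw [h1, Pi.add_apply, h2, Pi.smul_apply, smul_eq_mul]
      rw [hK] at hx
      filter_upwards [hcoe, hx, hA, hB, hbound] with ω hcoeω hxω hAω hBω hbω
      have htk := ht0 k
      have hth : |t k * h ω| ≤ ε := by
        rw [abs_mul, abs_of_pos htk]
        calc t k * |h ω| ≤ δ * C := by
              have := abs_nonneg (h ω)
              have hb : |h ω| ≤ C := by simpa [Real.norm_eq_abs] using hbω
              nlinarith [htδ k, (ht0 k).le]
          _ = ε * (C / (C + 1)) := by rw [hδ]; ring
          _ ≤ ε * 1 := by
              have : C / (C + 1) ≤ 1 := by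
                rw [div_le_one (by linarith)]; linarith
              nlinarith
          _ = ε := mul_one ε
      rw [hcoeω]
      constructor
      · by_cases hc : (x ω : EReal) ≤ xa ω + (ε : EReal)
        · have hh := hAω hc
          refine le_trans hxω.1 (EReal.coe_le_coe_iff.2 ?_)
          nlinarith [(ht0 k).le]
        · push_neg at hc
          have h1 : xa ω + (ε : EReal) ≤ (x ω : EReal) := hc.le
          have h2 := aux_le_sub (xa ω) (x ω) ε h1
          refine le_trans h2 (EReal.coe_le_coe_iff.2 ?_)
          have := abs_le.1 hth
          linarith [this.1]
      · by_cases hc : xb ω - (ε : EReal) ≤ (x ω : EReal)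
        · have hh := hBω hc
          refine le_trans (EReal.coe_le_coe_iff.2 ?_) hxω.2
          nlinarith [(ht0 k).le]
        · push_neg at hc
          have h2 := aux_add_le (xb ω) (x ω) ε hc.le
          refine le_trans (EReal.coe_le_coe_iff.2 ?_) h2
          have := abs_le.1 hth
          linarith [this.2]
    · -- tendsto xs → x
      have h1 : Tendsto (fun k => t k • h) atTop (𝓝 ((0 : ℝ) • h)) :=
        httend.smul_const h
      rw [zero_smul] at h1
      have h2 := h1.const_add x
      rw [add_zero] at h2
      exact h2
    · -- tendsto quotient → h
      have heq : (fun k => (t k)⁻¹ • (x + t k • h - x)) = fun _ => h := by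
        funext k
        rw [add_sub_cancel_left, smul_smul, inv_mul_cancel₀ (ht0 k).ne', one_smul]
      rw [heq]
      exact tendsto_const_nhds
  · -- Part 2
    intro h hmem
    obtain ⟨xs, t, hxsK, ht, _, _, hconv⟩ := hmem
    have hfg : Tendsto (fun k => (t k)⁻¹ • (xs k - x)) atTop (𝓝 h) := hconv
    have htm : TendstoInMeasure μ (fun k => ⇑((t k)⁻¹ • (xs k - x))) atTop ⇑h :=
      tendstoInMeasure_of_tendsto_Lp hfg
    obtain ⟨ns, hns, hae⟩ := htm.exists_seq_tendsto_ae
    have hallK : ∀ᵐ ω ∂μ, ∀ k, xa ω ≤ (xs k ω : EReal) ∧ (xs k ω : EReal) ≤ xb ω :=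
      (ae_all_iff).2 fun k => by have := hxsK k; rw [hK] at this; exact this
    have hallf : ∀ᵐ ω ∂μ, ∀ k, ((t k)⁻¹ • (xs k - x)) ω = (t k)⁻¹ * (xs k ω - x ω) :=
      (ae_all_iff).2 fun k => by
        filter_upwards [Lp.coeFn_smul ((t k)⁻¹) (xs k - x), Lp.coeFn_sub (xs k) x]
          with ω h1 h2
        rw [h1, Pi.smul_apply, h2, Pi.sub_apply, smul_eq_mul]
    constructor
    · filter_upwards [hallK, hallf, hae] with ω h1 h2 h3 hxaeq
      refine ge_of_tendsto' h3 fun i => ?_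
      rw [h2 (ns i)]
      have hle : x ω ≤ xs (ns i) ω := by
        have := (h1 (ns i)).1
        rw [hxaeq, EReal.coe_le_coe_iff] at this
        exact this
      have := ht (ns i)
      have : (0:ℝ) ≤ (t (ns i))⁻¹ := (inv_pos.2 (ht (ns i))).le
      nlinarith
    · filter_upwards [hallK, hallf, hae] with ω h1 h2 h3 hxbeq
      refine le_of_tendsto' h3 fun i => ?_
      rw [h2 (ns i)]
      have hle : xs (ns i) ω ≤ x ω := by
        have := (h1 (ns i)).2
        rw [hxbeq, EReal.coe_le_coe_iff] at this
        exact this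
      have : (0:ℝ) ≤ (t (ns i))⁻¹ := (inv_pos.2 (ht (ns i))).le
      nlinarith
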